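/- For finite-dimensional partial groups X and Y, the coproduct X ∨ Y in the category of partial groups satisfies dim(X ∨ Y) = max(dim X, dim Y). -/

import Mathlib

open CategoryTheory Opposite

/-- The skeleton of the category of finite nonempty sets: objects are natural
numbers `n`, standing for `[n] = {0, …, n}`, morphisms are all functions. -/
def Ups : Type := ℕ

/-- The natural number underlying an object of `Ups`. -/
def Ups.toNat : Ups → ℕ := fun n => n

/-- The object `[n]` of `Ups`. -/
def Ups.of : ℕ → Ups := fun n => n

instance : Category Ups where
  Hom n m := Fin (n.toNat + 1) → Fin (m.toNat + 1)
  id _ := _root_.id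
  comp f g := g ∘ f

/-- A symmetric set is a presheaf on `Ups`. -/
abbrev SymmSet := Upsᵒᵖ ⥤ Type

/-- The map `ε_{ij} : [1] → [n]` sending `0, 1` to `i, j`. -/
def eps (n : ℕ) (i j : Fin (n + 1)) : Ups.of 1 ⟶ Ups.of n :=
  fun k => if k = 0 then i else j

/-- The set of `n`-simplices of a symmetric set. -/
abbrev simp (X : SymmSet) (n : ℕ) : Type := X.obj (op (Ups.of n))

/-- The Bousfield–Segal map `𝓑ₙ : Xₙ → X₁ⁿ`, `x ↦ (ε₀₁*x, …, ε₀ₙ*x)`. -/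
def BS (X : SymmSet) (n : ℕ) (x : simp X n) : Fin n → simp X 1 :=
  fun k => X.map (eps n 0 k.succ).op x

/-- The Segal map `𝓔ₙ : Xₙ → X₁ⁿ`, `x ↦ (ε₀₁*x, ε₁₂*x, …, ε₍ₙ₋₁₎ₙ*x)`. -/
def ES (X : SymmSet) (n : ℕ) (x : simp X n) : Fin n → simp X 1 :=
  fun k => X.map (eps n k.castSucc k.succ).op x

/-- The canonical map `μ_X` to matrices, `x ↦ (ε_{ij}* x)_{ij}`. -/
def muMat (X : SymmSet) (n : ℕ) (x : simp X n) :
    Fin (n + 1) → Fin (n + 1) → simp X 1 :=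
  fun i j => X.map (eps n i j).op x

/-- A symmetric set is spiny if all Bousfield–Segal maps are injective. -/
def Spiny (X : SymmSet) : Prop := ∀ n, Function.Injective (BS X n)
/-- The matrix symmetric set `Mat(S)`: `n`-simplices are functions `[n]×[n] → S`. -/
def MatS (S : Type) : SymmSet where
  obj k := Fin (k.unop.toNat + 1) → Fin (k.unop.toNat + 1) → S
  map f := TypeCat.ofHom fun M => fun a b => M (f.unop a) (f.unop b)
  map_id := by intros; rfl
  map_comp := by intros; rfl

/-- An `n`-simplex is degenerate if it is `ρ* y` for a noninvertible surjection
`ρ : [n] ↠ [m]` and an `m`-simplex `y`. -/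
def Degen (X : SymmSet) (n : ℕ) (x : simp X n) : Prop :=
  ∃ (m : ℕ) (ρ : Ups.of n ⟶ Ups.of m), Function.Surjective ρ ∧
    ¬ Function.Bijective ρ ∧ ∃ y : simp X m, x = X.map ρ.op y

/-- The `d`-skeleton of a symmetric set, as a symmetric subset. -/
def skel (X : SymmSet) (d : ℕ) : SymmSet where
  obj k := {x : X.obj k // ∃ (i : ℕ) (_ : i ≤ d) (α : k.unop ⟶ Ups.of i)
      (y : simp X i), x = X.map α.op y}
  map f := TypeCat.ofHom fun x => ⟨X.map f x.1, by
    obtain ⟨i, hi, α, y, hy⟩ := x.2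
    refine ⟨i, hi, f.unop ≫ α, y, ?_⟩
    rw [hy, ← FunctorToTypes.map_comp_apply]
    rfl⟩
  map_id := by
    intro k; ext x
    first | rfl | simp
  map_comp := by
    intro k k' k'' f g; ext x
    first | rfl | simp

/-- A symmetric set is `d`-skeletal when all simplices above dimension `d`
are degenerate. -/
def SkeletalLE (X : SymmSet) (d : ℕ) : Prop :=
  ∀ n, d < n → ∀ x : simp X n, Degen X n x

/-- `X` has dimension `d` when `d` is the least integer such that `X` is
`d`-skeletal. -/
def HasDim (X : SymmSet) (d : ℕ) : Prop :=
  IsLeast {m | SkeletalLE X m} d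

/-- A symmetric set is reduced when it has exactly one `0`-simplex. -/
def Reduced (X : SymmSet) : Prop :=
  Nonempty (simp X 0) ∧ Subsingleton (simp X 0)

/-- A partial group is a reduced spiny symmetric set. -/
def IsPartialGroup (X : SymmSet) : Prop := Reduced X ∧ Spiny X

/-- A partial group is trivial when it has no nonidentity elements. -/
def TrivialPG (X : SymmSet) : Prop := Subsingleton (simp X 1)

/-- The order of a partial group: the number of its elements (edges). -/
noncomputable def orderPG (X : SymmSet) : ℕ := Nat.card (simp X 1)

/-- An edge is an identity if it is in the image of the degeneracy `X₀ → X₁`. -/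
def isIdent (X : SymmSet) (e : simp X 1) : Prop :=
  ∃ v : simp X 0, e = X.map (Quiver.Hom.op
    ((fun _ => 0 : Fin 2 → Fin 1) : Ups.of 1 ⟶ Ups.of 0)) v

/-- The source vertex of an edge. -/
def srcE (X : SymmSet) (e : simp X 1) : simp X 0 :=
  X.map (Quiver.Hom.op ((fun _ => 0 : Fin 1 → Fin 2) : Ups.of 0 ⟶ Ups.of 1)) e

/-- `X` has (higher Segal) degree at most `k`: for each starry word `w` of
length `n+1 ≥ k+1`, if the last `k+1` faces `d_{n+1-k} w, …, d_{n+1} w` of `w`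
are Bousfield–Segal images of simplices, then so is `w`. -/
def HasDegLE (X : SymmSet) (k : ℕ) : Prop :=
  ∀ n, k ≤ n → ∀ w : Fin (n + 1) → simp X 1,
    (∀ a b, srcE X (w a) = srcE X (w b)) →
    (∀ i : Fin (n + 1), n ≤ (i : ℕ) + k →
      (fun j : Fin n => w (i.succAbove j)) ∈ Set.range (BS X n)) →
    w ∈ Set.range (BS X (n + 1))

/-- `X` has degree `d`: `d` is the least `k ≥ 1` with `HasDegLE X k`. -/
def DegreeIs (X : SymmSet) (d : ℕ) : Prop :=
  IsLeast {k | 1 ≤ k ∧ HasDegLE X k} d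

/-- `W`, with structure maps `i, j`, is a coproduct of `Y` and `Z` in the
category of partial groups. -/
def IsPGCoproduct (W Y Z : SymmSet) (i : Y ⟶ W) (j : Z ⟶ W) : Prop :=
  ∀ V : SymmSet, IsPartialGroup V → ∀ (f : Y ⟶ V) (g : Z ⟶ V),
    ∃! h : W ⟶ V, i ≫ h = f ∧ j ≫ h = g

/-- The nerve of a group `G`, as a symmetric set: an `n`-simplex is a matrix
`(g_{ij})` of elements of `G` satisfying the cocycle condition. -/
def grpNerve (G : Type) [Group G] : SymmSet where
  obj k := {M : Fin (k.unop.toNat + 1) → Fin (k.unop.toNat + 1) → G //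
      ∀ i j l, M i j * M j l = M i l}
  map f := TypeCat.ofHom fun M => ⟨fun a b => M.1 (f.unop a) (f.unop b),
    fun i j l => M.2 (f.unop i) (f.unop j) (f.unop l)⟩
  map_id := by intro k; rfl
  map_comp := by intros; rfl

/-- A partial group is decomposable if it is a coproduct (in the category of
partial groups) of two nontrivial partial groups. -/
def PGDecomposable (X : SymmSet) : Prop :=
  ∃ (Y Z : SymmSet) (i : Y ⟶ X) (j : Z ⟶ X),
    IsPartialGroup Y ∧ IsPartialGroup Z ∧ ¬ TrivialPG Y ∧ ¬ TrivialPG Z ∧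
      IsPGCoproduct X Y Z i j

/-- A partial group is indecomposable if it is nontrivial and in any coproduct
decomposition one of the factors is trivial. -/
def PGIndecomposable (X : SymmSet) : Prop :=
  ¬ TrivialPG X ∧
    ∀ (Y Z : SymmSet) (i : Y ⟶ X) (j : Z ⟶ X), IsPartialGroup Y →
      IsPartialGroup Z → IsPGCoproduct X Y Z i j → TrivialPG Y ∨ TrivialPG Z

namespace DimCopAux

/-- The constant map to `[0]`. -/
def cz (k : Ups) : k ⟶ Ups.of 0 := fun _ => 0

lemma comp_cz {k k' : Ups} (f : k ⟶ k') : f ≫ cz k' = cz k := by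
  funext a; exact Subsingleton.elim (α := Fin 1) _ _

/-- Basepoint simplices of a reduced symmetric set. -/
noncomputable def bp (X : SymmSet) (h : Reduced X) (k : Ups) : X.obj (op k) :=
  X.map (cz k).op h.1.some

lemma bp_natural (X : SymmSet) (h : Reduced X) {a b : Upsᵒᵖ} (f : a ⟶ b) :
    X.map f (bp X h a.unop) = bp X h b.unop := by
  show X.map f (X.map (cz a.unop).op h.1.some) = _
  rw [← FunctorToTypes.map_comp_apply]
  show X.map (f.unop ≫ cz a.unop).op h.1.some = _
  rw [comp_cz]
  rfl

lemma map_zero_eq_bp (X : SymmSet) (h : Reduced X) (k : Ups)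
    (v : X.obj (op (Ups.of 0))) : X.map (cz k).op v = bp X h k := by
  have hv : v = h.1.some := h.2.allEq v h.1.some
  rw [hv]; rfl

lemma zero_eq_bp (X : SymmSet) (h : Reduced X) (v : X.obj (op (Ups.of 0))) :
    v = bp X h (Ups.of 0) := h.2.allEq _ _

section Wedge

variable (X Y : SymmSet) (hX : Reduced X) (hY : Reduced Y)

/-- The wedge relation. -/
def wrel (k : Ups) (a b : X.obj (op k) ⊕ Y.obj (op k)) : Prop :=
  a = b ∨
    ((a = .inl (bp X hX k) ∨ a = .inr (bp Y hY k)) ∧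
     (b = .inl (bp X hX k) ∨ b = .inr (bp Y hY k)))

def wsetoid (k : Ups) : Setoid (X.obj (op k) ⊕ Y.obj (op k)) :=
  ⟨wrel X Y hX hY k, by
    constructor
    · intro a; exact Or.inl rfl
    · intro a b hab; rcases hab with rfl | ⟨h1, h2⟩
      · exact Or.inl rfl
      · exact Or.inr ⟨h2, h1⟩
    · intro a b c hab hbc
      rcases hab with rfl | ⟨h1, h2⟩
      · exact hbc
      · rcases hbc with rfl | ⟨h3, h4⟩
        · exact Or.inr ⟨h1, h2⟩
        · exact Or.inr ⟨h1, h4⟩⟩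

lemma wrel_preserved {a b : Upsᵒᵖ} (f : a ⟶ b)
    {p q : X.obj (op a.unop) ⊕ Y.obj (op a.unop)}
    (hpq : wrel X Y hX hY a.unop p q) :
    wrel X Y hX hY b.unop (Sum.map (X.map f) (Y.map f) p)
      (Sum.map (X.map f) (Y.map f) q) := by
  have hbpX : Sum.map (X.map f) (Y.map f) (Sum.inl (bp X hX a.unop) :
      X.obj (op a.unop) ⊕ Y.obj (op a.unop)) = Sum.inl (bp X hX b.unop) := by
    simp [Sum.map, bp_natural X hX f]
  have hbpY : Sum.map (X.map f) (Y.map f) (Sum.inr (bp Y hY a.unop) :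
      X.obj (op a.unop) ⊕ Y.obj (op a.unop)) = Sum.inr (bp Y hY b.unop) := by
    simp [Sum.map, bp_natural Y hY f]
  rcases hpq with rfl | ⟨h1, h2⟩
  · exact Or.inl rfl
  · refine Or.inr ⟨?_, ?_⟩
    · rcases h1 with rfl | rfl
      · exact Or.inl hbpX
      · exact Or.inr hbpY
    · rcases h2 with rfl | rfl
      · exact Or.inl hbpX
      · exact Or.inr hbpY

/-- The wedge of two reduced symmetric sets. -/
noncomputable def Wdg : SymmSet where
  obj a := Quotient (wsetoid X Y hX hY a.unop)
  map f := TypeCat.ofHom (Quotient.map (Sum.map (X.map f) (Y.map f))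
    (fun _ _ h => wrel_preserved X Y hX hY f h))
  map_id := by
    intro a; ext q
    induction q using Quotient.ind with
    | _ p =>
      rcases p with x | y <;>
        simp [Quotient.map_mk, Sum.map, FunctorToTypes.map_id_apply]
  map_comp := by
    intro a b c f g; ext q
    induction q using Quotient.ind with
    | _ p =>
      rcases p with x | y <;>
        (simp [Quotient.map_mk, Sum.map, FunctorToTypes.map_comp_apply]; rfl)

lemma Wdg_map_mk {a b : Upsᵒᵖ} (f : a ⟶ b) (p : X.obj (op a.unop) ⊕ Y.obj (op a.unop)) :
    (Wdg X Y hX hY).map f (Quotient.mk _ p) =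
      Quotient.mk _ (Sum.map (X.map f) (Y.map f) p) := rfl

/-- Inclusion of X into the wedge. -/
noncomputable def inX : X ⟶ Wdg X Y hX hY where
  app a := TypeCat.ofHom fun x => Quotient.mk _ (Sum.inl x)
  naturality := by intros; rfl

noncomputable def inY : Y ⟶ Wdg X Y hX hY where
  app a := TypeCat.ofHom fun y => Quotient.mk _ (Sum.inr y)
  naturality := by intros; rfl

lemma mk_inl_eq_inl {k : Ups} {x x' : X.obj (op k)}
    (h : (Quotient.mk (wsetoid X Y hX hY k) (Sum.inl x)) = Quotient.mk _ (Sum.inl x')) :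
    x = x' := by
  have := Quotient.exact h
  rcases this with h1 | ⟨h1, h2⟩
  · exact Sum.inl.inj h1
  · rcases h1 with h1 | h1
    · rcases h2 with h2 | h2
      · rw [Sum.inl.inj h1, Sum.inl.inj h2]
      · exact absurd h2 (by simp)
    · exact absurd h1 (by simp)

lemma mk_inr_eq_inr {k : Ups} {y y' : Y.obj (op k)}
    (h : (Quotient.mk (wsetoid X Y hX hY k) (Sum.inr y)) = Quotient.mk _ (Sum.inr y')) :
    y = y' := by
  have := Quotient.exact h
  rcases this with h1 | ⟨h1, h2⟩
  · exact Sum.inr.inj h1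
  · rcases h1 with h1 | h1
    · exact absurd h1 (by simp)
    · rcases h2 with h2 | h2
      · exact absurd h2 (by simp)
      · rw [Sum.inr.inj h1, Sum.inr.inj h2]

lemma mk_inl_eq_inr {k : Ups} {x : X.obj (op k)} {y : Y.obj (op k)}
    (h : (Quotient.mk (wsetoid X Y hX hY k) (Sum.inl x)) = Quotient.mk _ (Sum.inr y)) :
    x = bp X hX k ∧ y = bp Y hY k := by
  have := Quotient.exact h
  rcases this with h1 | ⟨h1, h2⟩
  · exact absurd h1 (by simp)
  · constructor
    · rcases h1 with h1 | h1
      · exact Sum.inl.inj h1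
      · exact absurd h1 (by simp)
    · rcases h2 with h2 | h2
      · exact absurd h2 (by simp)
      · exact Sum.inr.inj h2

lemma mk_bp_eq {k : Ups} :
    (Quotient.mk (wsetoid X Y hX hY k) (Sum.inl (bp X hX k))) =
      Quotient.mk _ (Sum.inr (bp Y hY k)) :=
  Quotient.sound (Or.inr ⟨Or.inl rfl, Or.inr rfl⟩)

lemma Wdg_reduced : Reduced (Wdg X Y hX hY) := by
  constructor
  · exact ⟨Quotient.mk _ (Sum.inl (bp X hX (Ups.of 0)))⟩
  · constructor
    intro q q'
    induction q using Quotient.ind with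
    | _ p =>
      induction q' using Quotient.ind with
      | _ p' =>
        rcases p with x | y <;> rcases p' with x' | y'
        · rw [zero_eq_bp X hX x, zero_eq_bp X hX x']
        · rw [zero_eq_bp X hX x, zero_eq_bp Y hY y']
          exact mk_bp_eq X Y hX hY
        · rw [zero_eq_bp Y hY y, zero_eq_bp X hX x']
          exact (mk_bp_eq X Y hX hY).symm
        · rw [zero_eq_bp Y hY y, zero_eq_bp Y hY y']

lemma BS_Wdg_inl (n : ℕ) (x : simp X n) :
    BS (Wdg X Y hX hY) n (Quotient.mk _ (Sum.inl x)) =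
      fun k => Quotient.mk _ (Sum.inl (BS X n x k)) := rfl

lemma BS_bp (X : SymmSet) (hX : Reduced X) (n : ℕ) (k : Fin n) :
    BS X n (bp X hX (Ups.of n)) k = bp X hX (Ups.of 1) :=
  bp_natural X hX (eps n 0 k.succ).op

lemma Wdg_spiny (sX : Spiny X) (sY : Spiny Y) : Spiny (Wdg X Y hX hY) := by
  intro n q q' h
  induction q using Quotient.ind with
  | _ p =>
    induction q' using Quotient.ind with
    | _ p' =>
      rcases p with x | y <;> rcases p' with x' | y'
      · have : BS X n x = BS X n x' := by
          funext k
          exact mk_inl_eq_inl X Y hX hY (congrFun h k)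
        rw [sX n this]
      · -- mixed case : all edges are basepoints
        have hx : x = bp X hX (Ups.of n) := by
          apply sX n
          funext k
          have := (mk_inl_eq_inr X Y hX hY (congrFun h k)).1
          rw [show (BS X n x k = bp X hX (Ups.of 1)) from this, BS_bp]
        have hy : y' = bp Y hY (Ups.of n) := by
          apply sY n
          funext k
          have := (mk_inl_eq_inr X Y hX hY (congrFun h k)).2
          rw [show (BS Y n y' k = bp Y hY (Ups.of 1)) from this, BS_bp]
        rw [hx, hy]
        exact mk_bp_eq X Y hX hY
      · have hy : y = bp Y hY (Ups.of n) := by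
          apply sY n
          funext k
          have := (mk_inl_eq_inr X Y hX hY (congrFun h k).symm).2
          rw [show (BS Y n y k = bp Y hY (Ups.of 1)) from this, BS_bp]
        have hx : x' = bp X hX (Ups.of n) := by
          apply sX n
          funext k
          have := (mk_inl_eq_inr X Y hX hY (congrFun h k).symm).1
          rw [show (BS X n x' k = bp X hX (Ups.of 1)) from this, BS_bp]
        rw [hx, hy]
        exact (mk_bp_eq X Y hX hY).symm
      · have : BS Y n y = BS Y n y' := by
          funext k
          exact mk_inr_eq_inr X Y hX hY (congrFun h k)
        rw [sY n this]

/-- The induced map out of the wedge. -/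
noncomputable def wlift {V : SymmSet} (hV : Reduced V) (f : X ⟶ V) (g : Y ⟶ V) :
    Wdg X Y hX hY ⟶ V where
  app a := TypeCat.ofHom (Quotient.lift (s := wsetoid X Y hX hY a.unop) (Sum.elim (f.app a) (g.app a)) (by
    intro p q hpq
    have key : f.app a (bp X hX a.unop) = g.app a (bp Y hY a.unop) := by
      show f.app a (X.map (cz a.unop).op hX.1.some) = g.app a (Y.map (cz a.unop).op hY.1.some)
      rw [FunctorToTypes.naturality, FunctorToTypes.naturality]
      exact congrArg (V.map (cz a.unop).op) (hV.2.allEq _ _)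
    rcases hpq with rfl | ⟨h1, h2⟩
    · rfl
    · have e1 : Sum.elim (f.app a) (g.app a) p = f.app a (bp X hX a.unop) := by
        rcases h1 with rfl | rfl
        · rfl
        · exact key.symm
      have e2 : Sum.elim (f.app a) (g.app a) q = f.app a (bp X hX a.unop) := by
        rcases h2 with rfl | rfl
        · rfl
        · exact key.symm
      rw [e1, e2]))
  naturality := by
    intro a b u
    ext q
    induction q using Quotient.ind with
    | _ p =>
      rcases p with x | y
      · exact NatTrans.naturality_apply f u x
      · exact NatTrans.naturality_apply g u y

lemma inX_wlift {V : SymmSet} (hV : Reduced V) (f : X ⟶ V) (g : Y ⟶ V) :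
    inX X Y hX hY ≫ wlift X Y hX hY hV f g = f := rfl

lemma inY_wlift {V : SymmSet} (hV : Reduced V) (f : X ⟶ V) (g : Y ⟶ V) :
    inY X Y hX hY ≫ wlift X Y hX hY hV f g = g := rfl

lemma Wdg_skeletal {dx dy : ℕ} (hx : SkeletalLE X dx) (hy : SkeletalLE Y dy) :
    SkeletalLE (Wdg X Y hX hY) (max dx dy) := by
  intro n hn q
  induction q using Quotient.ind with
  | _ p =>
    rcases p with x | y
    · obtain ⟨m, ρ, h1, h2, z, hz⟩ := hx n (lt_of_le_of_lt (le_max_left dx dy) hn) x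
      exact ⟨m, ρ, h1, h2, Quotient.mk _ (Sum.inl z), by rw [hz]; rfl⟩
    · obtain ⟨m, ρ, h1, h2, z, hz⟩ := hy n (lt_of_le_of_lt (le_max_right dx dy) hn) y
      exact ⟨m, ρ, h1, h2, Quotient.mk _ (Sum.inr z), by rw [hz]; rfl⟩

lemma bp_degen (X : SymmSet) (hX : Reduced X) (n : ℕ) (hn : 0 < n) :
    Degen X n (bp X hX (Ups.of n)) := by
  refine ⟨0, cz (Ups.of n), ?_, ?_, hX.1.some, rfl⟩
  · intro t
    exact ⟨⟨0, Nat.succ_pos _⟩, Subsingleton.elim (α := Fin 1) _ _⟩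
  · intro hbij
    have hinj : Function.Injective (fun _ : Fin (n + 1) => (0 : Fin 1)) := hbij.1
    have h01 := hinj (a₁ := ⟨0, by omega⟩) (a₂ := ⟨1, by omega⟩) rfl
    have := congrArg Fin.val h01
    simp at this

lemma skel_X_of_Wdg {m : ℕ} (h : SkeletalLE (Wdg X Y hX hY) m) : SkeletalLE X m := by
  intro n hn x
  obtain ⟨m', ρ, h1, h2, q, hq⟩ := h n hn (Quotient.mk _ (Sum.inl x))
  obtain ⟨p, rfl⟩ := Quotient.exists_rep q
  rcases p with z | z
  · exact ⟨m', ρ, h1, h2, z, mk_inl_eq_inl X Y hX hY hq⟩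
  · have hx : x = bp X hX (Ups.of n) := (mk_inl_eq_inr X Y hX hY hq).1
    rw [hx]
    exact bp_degen X hX n (by omega)

lemma skel_Y_of_Wdg {m : ℕ} (h : SkeletalLE (Wdg X Y hX hY) m) : SkeletalLE Y m := by
  intro n hn y
  obtain ⟨m', ρ, h1, h2, q, hq⟩ := h n hn (Quotient.mk _ (Sum.inr y))
  obtain ⟨p, rfl⟩ := Quotient.exists_rep q
  rcases p with z | z
  · have hy : y = bp Y hY (Ups.of n) := (mk_inl_eq_inr X Y hX hY hq.symm).2
    rw [hy]
    exact bp_degen Y hY n (by omega)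
  · exact ⟨m', ρ, h1, h2, z, mk_inr_eq_inr X Y hX hY hq⟩

end Wedge

lemma main_dim (X Y W : SymmSet) (i : X ⟶ W) (j : Y ⟶ W)
    (hXr : Reduced X) (hXs : Spiny X) (hYr : Reduced Y) (hYs : Spiny Y)
    (hW : IsPartialGroup W)
    (hco : IsPGCoproduct W X Y i j) (dx dy : ℕ)
    (hdx : HasDim X dx) (hdy : HasDim Y dy) :
    HasDim W (max dx dy) := by
  set V := Wdg X Y hXr hYr with hV
  have hVpg : IsPartialGroup V := ⟨Wdg_reduced X Y hXr hYr, Wdg_spiny X Y hXr hYr hXs hYs⟩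
  obtain ⟨h, ⟨hhi, hhj⟩, _⟩ := hco V hVpg (inX X Y hXr hYr) (inY X Y hXr hYr)
  set k := wlift X Y hXr hYr hW.1 i j with hkdef
  have hk : h ≫ k = 𝟙 W := by
    obtain ⟨t, _, htu⟩ := hco W ⟨hW.1, hW.2⟩ i j
    have e1 : h ≫ k = t := htu _ ⟨by rw [← Category.assoc, hhi]; rfl, by rw [← Category.assoc, hhj]; rfl⟩
    have e2 : 𝟙 W = t := htu _ ⟨Category.comp_id i, Category.comp_id j⟩
    rw [e1, e2]
  have hkh : ∀ (a : Upsᵒᵖ) (v : V.obj a), h.app a (k.app a v) = v := by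
    intro a v
    induction v using Quotient.ind with
    | _ p =>
      rcases p with x | y
      · show h.app a (i.app a x) = _
        exact congrArg (fun (t : X ⟶ V) => t.app a x) hhi
      · show h.app a (j.app a y) = _
        exact congrArg (fun (t : Y ⟶ V) => t.app a y) hhj
  have hhk : ∀ (a : Upsᵒᵖ) (w : W.obj a), k.app a (h.app a w) = w := by
    intro a w
    exact congrArg (fun (t : W ⟶ W) => t.app a w) hk
  constructor
  · -- SkeletalLE W (max dx dy)
    have hsv : SkeletalLE V (max dx dy) := Wdg_skeletal X Y hXr hYr hdx.1 hdy.1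
    intro n hn w
    obtain ⟨m, ρ, h1, h2, y, hy⟩ := hsv n hn (h.app _ w)
    refine ⟨m, ρ, h1, h2, k.app _ y, ?_⟩
    rw [← hhk _ w, hy]
    exact NatTrans.naturality_apply k ρ.op y
  · intro m hm
    have hsv : SkeletalLE V m := by
      intro n hn v
      obtain ⟨m', ρ, h1, h2, y, hy⟩ := hm n hn (k.app _ v)
      refine ⟨m', ρ, h1, h2, h.app _ y, ?_⟩
      rw [← hkh _ v, hy]
      exact NatTrans.naturality_apply h ρ.op y
    exact max_le (hdx.2 (skel_X_of_Wdg X Y hXr hYr hsv)) (hdy.2 (skel_Y_of_Wdg X Y hXr hYr hsv))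


end DimCopAux

/-- For finite-dimensional partial groups `X` and `Y`, the coproduct `X ∨ Y`
in the category of partial groups has dimension `max (dim X) (dim Y)`. -/
theorem dim_coproduct (X Y W : SymmSet) (i : X ⟶ W) (j : Y ⟶ W)
    (hX : IsPartialGroup X) (hY : IsPartialGroup Y) (hW : IsPartialGroup W)
    (hco : IsPGCoproduct W X Y i j) (dx dy : ℕ)
    (hdx : HasDim X dx) (hdy : HasDim Y dy) :
    HasDim W (max dx dy) := by
  exact DimCopAux.main_dim X Y W i j hX.1 hX.2 hY.1 hY.2 hW hco dx dy hdx hdy
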